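/- For a connected graph Γ with n ≥ 2 vertices, the smallest distance eigenvalue δ_min satisfies δ_min > -2 if and only if δ_min = -1, which holds if and only if Γ is the complete graph K_n. -/

import Mathlib

open SimpleGraph Matrix Finset

/-- The distance matrix of a graph, with real entries. -/
noncomputable def distMatrix {V : Type*} [Fintype V] (G : SimpleGraph V) : Matrix V V ℝ :=
  Matrix.of fun x y => (G.dist x y : ℝ)

lemma distMatrix_isHermitian {V : Type*} [Fintype V] (G : SimpleGraph V) :
    (distMatrix G).IsHermitian := by
  ext x y
  simp [distMatrix, Matrix.conjTranspose_apply, SimpleGraph.dist_comm]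

/-- The multiset of eigenvalues (with multiplicity) of the distance matrix of `G`. -/
noncomputable def distSpec {V : Type*} [Fintype V] [DecidableEq V] (G : SimpleGraph V) :
    Multiset ℝ :=
  Finset.univ.val.map (distMatrix_isHermitian G).eigenvalues

section Rayleigh
variable {V : Type*} [Fintype V] [DecidableEq V]

lemma norm_eq_aux (A : Matrix V V ℝ) (hA : A.IsHermitian) (x : V → ℝ) :
    x ⬝ᵥ x = ∑ i, ((star (hA.eigenvectorUnitary : Matrix V V ℝ) *ᵥ x) i)^2 := by
  set U : Matrix V V ℝ := (hA.eigenvectorUnitary : Matrix V V ℝ) with hUdef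
  have hsym : star U = Uᵀ := by
    rw [Matrix.star_eq_conjTranspose, Matrix.conjTranspose_eq_transpose_of_trivial]
  have hUU : U * star U = 1 := (Matrix.mem_unitaryGroup_iff).mp hA.eigenvectorUnitary.2
  have h1 : (star U *ᵥ x) ⬝ᵥ (star U *ᵥ x) = x ⬝ᵥ x := by
    nth_rewrite 1 [hsym, Matrix.mulVec_transpose]
    rw [← Matrix.dotProduct_mulVec, Matrix.mulVec_mulVec, hUU, Matrix.one_mulVec]
  rw [← h1]
  simp [dotProduct, sq]

lemma quad_eq_aux (A : Matrix V V ℝ) (hA : A.IsHermitian) (x : V → ℝ) :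
    x ⬝ᵥ (A *ᵥ x) =
      ∑ i, hA.eigenvalues i * ((star (hA.eigenvectorUnitary : Matrix V V ℝ) *ᵥ x) i)^2 := by
  set U : Matrix V V ℝ := (hA.eigenvectorUnitary : Matrix V V ℝ) with hUdef
  have hsym : star U = Uᵀ := by
    rw [Matrix.star_eq_conjTranspose, Matrix.conjTranspose_eq_transpose_of_trivial]
  set y : V → ℝ := star U *ᵥ x with hy
  conv_lhs => rw [hA.spectral_theorem, Unitary.conjStarAlgAut_apply]
  rw [← Matrix.mulVec_mulVec, ← Matrix.mulVec_mulVec, Matrix.dotProduct_mulVec,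
    ← Matrix.mulVec_transpose, ← hsym, ← hy]
  simp only [dotProduct, Matrix.mulVec_diagonal]
  exact Finset.sum_congr rfl fun i _ => by
    simp [Function.comp, sq]; ring

lemma rayleigh_lower (A : Matrix V V ℝ) (hA : A.IsHermitian) (δ : ℝ)
    (hδ : ∀ i, δ ≤ hA.eigenvalues i) (x : V → ℝ) :
    δ * (x ⬝ᵥ x) ≤ x ⬝ᵥ (A *ᵥ x) := by
  rw [quad_eq_aux A hA x, norm_eq_aux A hA x, Finset.mul_sum]
  exact Finset.sum_le_sum fun i _ => mul_le_mul_of_nonneg_right (hδ i) (sq_nonneg _)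

lemma eig_lower (A : Matrix V V ℝ) (hA : A.IsHermitian) (c : ℝ)
    (h : ∀ x : V → ℝ, c * (x ⬝ᵥ x) ≤ x ⬝ᵥ (A *ᵥ x)) (i : V) : c ≤ hA.eigenvalues i := by
  set v : V → ℝ := ⇑(hA.eigenvectorBasis i) with hv
  have hvv : v ⬝ᵥ v = 1 := by
    have h1 := hA.eigenvectorBasis.orthonormal.1 i
    have h2 : (inner ℝ (hA.eigenvectorBasis i) (hA.eigenvectorBasis i) : ℝ) = 1 := by
      rw [real_inner_self_eq_norm_sq, h1]; norm_num
    simp only [PiLp.inner_apply, RCLike.inner_apply, conj_trivial] at h2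
    simpa [dotProduct, hv, mul_comm] using h2
  have h2 : v ⬝ᵥ (A *ᵥ v) = hA.eigenvalues i := by
    rw [hv, hA.mulVec_eigenvectorBasis]
    simp only [dotProduct_smul, smul_eq_mul]
    rw [← hv, hvv]; ring
  have := h v
  rwa [hvv, mul_one, h2] at this

end Rayleigh

section GraphPart
variable {V : Type*} [Fintype V] [DecidableEq V]

lemma single_quad (A : Matrix V V ℝ) (u v : V) (huv : u ≠ v) :
    (Pi.single u 1 - Pi.single v 1 : V → ℝ) ⬝ᵥ
        (A *ᵥ (Pi.single u 1 - Pi.single v 1 : V → ℝ)) = A u u + A v v - A u v - A v u ∧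
      (Pi.single u 1 - Pi.single v 1 : V → ℝ) ⬝ᵥ (Pi.single u 1 - Pi.single v 1 : V → ℝ) = 2 := by
  constructor
  · simp [sub_dotProduct, single_dotProduct, Matrix.mulVec_sub,
      Matrix.mulVec_single, Pi.sub_apply]
    ring
  · simp [sub_dotProduct, single_dotProduct, Pi.sub_apply,
      Pi.single_apply, huv, huv.symm]
    norm_num

lemma distMatrix_top_apply (a b : V) :
    distMatrix (⊤ : SimpleGraph V) a b = if a = b then 0 else 1 := by
  split
  · next h => simp [distMatrix, h]
  · next h =>
    have : (⊤ : SimpleGraph V).dist a b = 1 :=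
      SimpleGraph.dist_eq_one_iff_adj.mpr (by simpa using h)
    simp [distMatrix, this]

lemma top_quad (x : V → ℝ) :
    -1 * (x ⬝ᵥ x) ≤ x ⬝ᵥ (distMatrix (⊤ : SimpleGraph V) *ᵥ x) := by
  have hrow : ∀ i, (distMatrix (⊤ : SimpleGraph V) *ᵥ x) i = (∑ j, x j) - x i := by
    intro i
    simp only [Matrix.mulVec, dotProduct, distMatrix_top_apply, ite_mul, zero_mul, one_mul]
    have : ∀ j ∈ Finset.univ, (if i = j then (0:ℝ) else x j)
        = x j - (if j = i then x j else 0) := by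
      intro j _
      by_cases h : i = j <;> simp [h, eq_comm]
    rw [Finset.sum_congr rfl this, Finset.sum_sub_distrib, Finset.sum_ite_eq' Finset.univ i x]
    simp
  have hx : x ⬝ᵥ (distMatrix (⊤ : SimpleGraph V) *ᵥ x)
      = (∑ j, x j) * (∑ j, x j) - ∑ j, x j * x j := by
    simp only [dotProduct, hrow, mul_sub]
    rw [Finset.sum_sub_distrib, ← Finset.sum_mul]
  rw [hx]
  have h1 : (0:ℝ) ≤ (∑ j, x j) * (∑ j, x j) := mul_self_nonneg _
  simp only [dotProduct]
  nlinarith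

end GraphPart

theorem dcube_stmt1 {V : Type*} [Fintype V] [DecidableEq V] (G : SimpleGraph V)
    (hn : 2 ≤ Fintype.card V) (hconn : G.Connected) (δmin : ℝ)
    (hmem : δmin ∈ distSpec G) (hmin : ∀ μ ∈ distSpec G, δmin ≤ μ) :
    (-2 < δmin ↔ δmin = -1) ∧ (δmin = -1 ↔ G = ⊤) := by
  set A : Matrix V V ℝ := distMatrix G with hAdef
  have hA : A.IsHermitian := distMatrix_isHermitian G
  have hδ : ∀ i, δmin ≤ hA.eigenvalues i := fun i =>
    hmin _ (Multiset.mem_map.mpr ⟨i, Finset.mem_univ_val i, rfl⟩)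
  -- key bound: for u ≠ v, δmin ≤ -(dist u v)
  have key : ∀ u v : V, u ≠ v → δmin ≤ -(G.dist u v : ℝ) := by
    intro u v huv
    obtain ⟨hq, hn2⟩ := single_quad A u v huv
    have hray := rayleigh_lower A hA δmin hδ (Pi.single u 1 - Pi.single v 1)
    rw [hq, hn2] at hray
    have hAuu : A u u = 0 := by simp [hAdef, distMatrix]
    have hAvv : A v v = 0 := by simp [hAdef, distMatrix]
    have hAuv : A u v = (G.dist u v : ℝ) := rfl
    have hAvu : A v u = (G.dist u v : ℝ) := by
      simp [hAdef, distMatrix, SimpleGraph.dist_comm]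
    rw [hAuu, hAvv, hAuv, hAvu] at hray
    linarith
  -- δmin ≤ -1 always
  have h_le : δmin ≤ -1 := by
    obtain ⟨u, v, huv⟩ := Fintype.exists_pair_of_one_lt_card (α := V) (by omega)
    have hd : 0 < G.dist u v := hconn.pos_dist_of_ne huv
    have : (1:ℝ) ≤ (G.dist u v : ℝ) := by exact_mod_cast hd
    linarith [key u v huv]
  -- if G ≠ ⊤ then δmin ≤ -2
  have h_ne_top : G ≠ ⊤ → δmin ≤ -2 := by
    intro hne
    have : ¬ ∀ u v : V, u ≠ v → G.Adj u v := by
      intro hall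
      apply hne
      ext u v
      simp only [SimpleGraph.top_adj]
      exact ⟨fun h => h.ne, fun h => hall u v h⟩
    push_neg at this
    obtain ⟨u, v, huv, hnadj⟩ := this
    have hd1 : G.dist u v ≠ 1 := fun h => hnadj (SimpleGraph.dist_eq_one_iff_adj.mp h)
    have hd0 : 0 < G.dist u v := hconn.pos_dist_of_ne huv
    have hd2 : 2 ≤ G.dist u v := by omega
    have : (2:ℝ) ≤ (G.dist u v : ℝ) := by exact_mod_cast hd2
    linarith [key u v huv]
  -- if G = ⊤ then δmin = -1
  have h_top : G = ⊤ → δmin = -1 := by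
    intro htop
    refine le_antisymm h_le ?_
    obtain ⟨i, _, hi⟩ := Multiset.mem_map.mp hmem
    rw [← hi]
    apply eig_lower A hA (-1)
    intro x
    have := top_quad (V := V) x
    rw [hAdef, htop]
    exact this
  constructor
  · constructor
    · intro hlt
      by_cases htop : G = ⊤
      · exact h_top htop
      · linarith [h_ne_top htop]
    · intro h; rw [h]; norm_num
  · constructor
    · intro h
      by_contra htop
      have := h_ne_top htop
      rw [h] at this; norm_num at this
    · exact h_top
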